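/- Let m > 1 and let S : ℝ^m → V be a smooth symmetric (1,2)-tensor field on ℝ^m. If L_X S = 0 for every smooth vector field X on ℝ^m, then S = 0. -/
import Mathlib


/-- The Lie derivative of a (1,2)-tensor field `S` on `ℝ^m` along a vector field `X`:
`(L_X S)(p)(u,v) = DS(p)(X(p))(u,v) − DX(p)(S(p)(u,v)) + S(p)(DX(p)u, v) + S(p)(u, DX(p)v)`. -/
noncomputable def lieDerivTensor (m : ℕ)
    (X : (Fin m → ℝ) → (Fin m → ℝ))
    (S : (Fin m → ℝ) → ((Fin m → ℝ) →L[ℝ] (Fin m → ℝ) →L[ℝ] (Fin m → ℝ)))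
    (p u v : Fin m → ℝ) : Fin m → ℝ :=
  fderiv ℝ S p (X p) u v - fderiv ℝ X p (S p u v)
    + S p (fderiv ℝ X p u) v + S p u (fderiv ℝ X p v)

/-- For `m > 1`, a smooth symmetric (1,2)-tensor field `S` on `ℝ^m` whose Lie
derivative along every smooth vector field vanishes is zero. -/
theorem tensor_field_with_vanishing_lie_derivatives_is_zero
    (m : ℕ) (hm : 1 < m)
    (S : (Fin m → ℝ) → ((Fin m → ℝ) →L[ℝ] (Fin m → ℝ) →L[ℝ] (Fin m → ℝ)))
    (hS : ContDiff ℝ (⊤ : ℕ∞) S)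
    (hsymm : ∀ p u v : Fin m → ℝ, S p u v = S p v u)
    (h : ∀ X : (Fin m → ℝ) → (Fin m → ℝ), ContDiff ℝ (⊤ : ℕ∞) X →
        ∀ p u v : Fin m → ℝ, lieDerivTensor m X S p u v = 0) :
    S = 0 := by
  have hconst : ∀ p c u v : Fin m → ℝ, fderiv ℝ S p c u v = 0 := by
    intro p c u v
    have := h (fun _ => c) contDiff_const p u v
    simpa [lieDerivTensor, fderiv_const] using this
  have hid : ∀ p u v : Fin m → ℝ, S p u v = 0 := by
    intro p u v
    have := h id contDiff_id p u v
    rw [lieDerivTensor] at this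
    rw [fderiv_id] at this
    simp only [ContinuousLinearMap.coe_id', id_eq] at this
    rw [hconst p p u v] at this
    simpa using this
  ext p u v
  simp [hid]
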